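/- If a group G embeds in the topological full group of a full shift Σ^ℤ with linear plook-ahead, then G admits a faithful action by elements of the topological full group of a full shift (with alphabet Σ' = Σ × Σ, say) with linear plook-ahead in which the cocycle of every group element takes only even values. Concretely, if each g acts on Σ^ℤ with cocycle c_g, then the action on (Σ × Σ)^ℤ obtained by applying c_g to the sequence of first coordinates and shifting by 2·c_g is a faithful action by topological full group elements whose cocycles take only even values, and which retains linear plook-ahead. -/

import Mathlib

/-- The shift map `σ^n`: `(shiftZ n x) i = x (i + n)`; `shiftZ 1` is the left shift `σ`. -/
def shiftZ {A : Type*} (n : ℤ) (x : ℤ → A) : ℤ → A := fun i => x (i + n)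

/-- An action of a group `G` by elements of the topological full group of the full
shift `A^ℤ`, given together with the continuous cocycles `c g`. -/
structure FullShiftTFGAction (A : Type*) [TopologicalSpace A] (G : Type*) [Group G] where
  f : G → ((ℤ → A) ≃ₜ (ℤ → A))
  c : G → (ℤ → A) → ℤ
  cont : ∀ g, Continuous (c g)
  spec : ∀ g x, f g x = shiftZ (c g x) x
  map_mul : ∀ g h x, f (g * h) x = f g (f h x)

/-- `T` has plook-ahead `α`: for every nontrivial `g` there are `n ≥ 1` and a periodic
point `x` of period `p ≤ 2n+1` with `|c g x| + α(|c g x|) ≥ n`. -/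
def HasPlook {A G : Type*} [TopologicalSpace A] [Group G]
    (T : FullShiftTFGAction A G) (α : ℕ → ℕ) : Prop :=
  ∀ g : G, g ≠ 1 → ∃ (n p : ℕ) (x : ℤ → A), 1 ≤ n ∧ 1 ≤ p ∧ p ≤ 2 * n + 1 ∧
    shiftZ (p : ℤ) x = x ∧ n ≤ (T.c g x).natAbs + α ((T.c g x).natAbs)

/-- `α` is linear: `α n ≤ C n + C` for some constant `C`. -/
def LinearFn (α : ℕ → ℕ) : Prop := ∃ C : ℕ, ∀ n, α n ≤ C * n + C

/- ------------------------------------------------------------------------- -/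
/- Auxiliary material for the proof.                                          -/
/- ------------------------------------------------------------------------- -/

section EvenAux

lemma shiftZ_shiftZ {A : Type*} (k l : ℤ) (x : ℤ → A) :
    shiftZ k (shiftZ l x) = shiftZ (k + l) x := by
  funext i; simp [shiftZ, add_assoc]

lemma shiftZ_zero {A : Type*} (x : ℤ → A) : shiftZ 0 x = x := by
  funext i; simp [shiftZ]

lemma shiftZ_cancel {A : Type*} {a b : ℤ} {x : ℤ → A}
    (h : shiftZ a x = shiftZ b x) : shiftZ (a - b) x = x := by
  have h2 : shiftZ (-b) (shiftZ a x) = shiftZ (-b) (shiftZ b x) := by rw [h]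
  rw [shiftZ_shiftZ, shiftZ_shiftZ] at h2
  have e1 : -b + a = a - b := by ring
  have e2 : -b + b = 0 := by ring
  rw [e1, e2, shiftZ_zero] at h2
  exact h2

lemma shiftZ_continuous {A : Type*} [TopologicalSpace A] (k : ℤ) :
    Continuous (fun x : ℤ → A => shiftZ k x) :=
  continuous_pi fun i => continuous_apply (i + k)

/-- A continuous "period selector" must vanish identically, since aperiodic
points are dense in the full shift (when the alphabet has two elements). -/
lemma cocycle_vanish {B : Type*} [TopologicalSpace B] {b1 b2 : B} (hb : b1 ≠ b2)
    (D : (ℤ → B) → ℤ) (hD : Continuous D)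
    (hfix : ∀ v, shiftZ (D v) v = v) : ∀ v, D v = 0 := by
  intro v
  by_contra hd
  have hopen : IsOpen (D ⁻¹' {D v}) := (isOpen_discrete _).preimage hD
  obtain ⟨I, U, hU, hsub⟩ := isOpen_pi_iff.mp hopen v rfl
  classical
  set w : ℤ → B := fun j => if j ∈ I then v j else if 0 ≤ j then b1 else b2 with hw
  have hwmem : w ∈ (↑I : Set ℤ).pi U := by
    intro j hj
    have hj' : j ∈ I := hj
    simp only [hw, if_pos hj']
    exact (hU j hj').2
  have hDw : D w = D v := hsub hwmem
  have hperiod : shiftZ (D v) w = w := by rw [← hDw]; exact hfix w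
  have hneg : shiftZ (-(D v)) w = w := by
    conv_lhs => rw [← hperiod]
    rw [shiftZ_shiftZ]
    rw [show -(D v) + D v = 0 from by ring, shiftZ_zero]
  have hmul : ∀ k : ℤ, shiftZ (D v * k) w = w := by
    intro k
    induction k using Int.induction_on with
    | zero => simpa using shiftZ_zero w
    | succ n ih =>
        rw [show D v * (n + 1 : ℤ) = D v * n + D v from by ring, ← shiftZ_shiftZ,
          hperiod, ih]
    | pred n ih =>
        rw [show D v * (-n - 1 : ℤ) = D v * (-n : ℤ) + -(D v) from by ring,
          ← shiftZ_shiftZ, hneg, ih]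
  set M : ℕ := I.sup Int.natAbs with hM
  have hIbound : ∀ j ∈ I, j.natAbs ≤ M := fun j hj => Finset.le_sup hj
  set j₀ : ℤ := (M : ℤ) + 1 with hj₀
  have hj₀I : j₀ ∉ I := by
    intro h
    have := hIbound _ h
    omega
  have hwj₀ : w j₀ = b1 := by
    simp only [hw, if_neg hj₀I, if_pos (show (0:ℤ) ≤ j₀ by omega)]
  set k : ℤ := -(D v) * (2 * (M : ℤ) + 2) with hk
  have hsq : 1 ≤ D v * D v := by
    have := mul_self_pos.mpr hd
    omega
  have hDk : D v * k = -(D v * D v) * (2 * (M : ℤ) + 2) := by rw [hk]; ring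
  have hj₂ : j₀ + D v * k ≤ -((M : ℤ) + 1) := by
    rw [hDk, hj₀]
    nlinarith [hsq]
  have hj₂I : j₀ + D v * k ∉ I := by
    intro h
    have := hIbound _ h
    omega
  have hwj₂ : w (j₀ + D v * k) = b2 := by
    simp only [hw, if_neg hj₂I, if_neg (show ¬ (0:ℤ) ≤ j₀ + D v * k by omega)]
  have := congrFun (hmul k) j₀
  simp only [shiftZ] at this
  rw [hwj₂, hwj₀] at this
  exact hb this.symm

variable {A G : Type*} [TopologicalSpace A] [Group G]

lemma f_one_eval (T : FullShiftTFGAction A G) (x : ℤ → A) : T.f 1 x = x := by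
  have h := T.map_mul 1 1 x
  rw [mul_one] at h
  exact ((T.f 1).injective h).symm

lemma c_one (T : FullShiftTFGAction A G) {a b : A} (hab : a ≠ b) (u : ℤ → A) :
    T.c 1 u = 0 :=
  cocycle_vanish hab (T.c 1) (T.cont 1)
    (fun v => by rw [← T.spec 1 v, f_one_eval T v]) u

lemma c_mul (T : FullShiftTFGAction A G) {a b : A} (hab : a ≠ b) (g h : G) (u : ℤ → A) :
    T.c (g * h) u = T.c h u + T.c g (T.f h u) := by
  have key : ∀ v, shiftZ (T.c (g * h) v - (T.c h v + T.c g (T.f h v))) v = v := by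
    intro v
    apply shiftZ_cancel
    have h1 : T.f (g * h) v = shiftZ (T.c g (T.f h v) + T.c h v) v := by
      rw [T.map_mul g h v, T.spec g (T.f h v), T.spec h v, shiftZ_shiftZ]
    have h2 := T.spec (g * h) v
    rw [← h2, h1, add_comm]
  have hcont : Continuous (fun v => T.c (g * h) v - (T.c h v + T.c g (T.f h v))) :=
    (T.cont (g * h)).sub ((T.cont h).add ((T.cont g).comp (T.f h).continuous))
  have := cocycle_vanish hab _ hcont key u
  omega

/-- Read off the first coordinates at even positions; this halves shifts. -/
def Pmap {A : Type*} (x : ℤ → A × A) : ℤ → A := fun i => (x (2 * i)).1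

lemma Pmap_shift {A : Type*} (k : ℤ) (x : ℤ → A × A) :
    Pmap (shiftZ (2 * k) x) = shiftZ k (Pmap x) := by
  funext i
  simp only [Pmap, shiftZ]
  rw [show 2 * i + 2 * k = 2 * (i + k) from by ring]

lemma Pmap_continuous {A : Type*} [TopologicalSpace A] :
    Continuous (Pmap : (ℤ → A × A) → (ℤ → A)) :=
  continuous_pi fun i => (continuous_apply (2 * i)).fst

/-- The doubled cocycle on `(A × A)^ℤ`. -/
def c2 {A G : Type*} [TopologicalSpace A] [Group G] (T : FullShiftTFGAction A G)
    (g : G) (x : ℤ → A × A) : ℤ := 2 * T.c g (Pmap x)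

lemma c2_continuous (T : FullShiftTFGAction A G) (g : G) :
    Continuous (c2 T g) := by
  show Continuous fun x : ℤ → A × A => 2 * T.c g (Pmap x)
  exact (continuous_of_discreteTopology (f := fun z : ℤ => 2 * z)).comp
    ((T.cont g).comp Pmap_continuous)

lemma c2_comp (T : FullShiftTFGAction A G) {a b : A} (hab : a ≠ b) (g h : G)
    (x : ℤ → A × A) :
    shiftZ (c2 T g (shiftZ (c2 T h x) x)) (shiftZ (c2 T h x) x)
      = shiftZ (c2 T (g * h) x) x := by
  have e1 : Pmap (shiftZ (c2 T h x) x) = T.f h (Pmap x) := by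
    simp only [c2]
    rw [Pmap_shift, ← T.spec]
  rw [shiftZ_shiftZ]
  have e2 : c2 T g (shiftZ (c2 T h x) x) + c2 T h x = c2 T (g * h) x := by
    simp only [c2] at e1 ⊢
    rw [e1, c_mul T hab g h (Pmap x)]
    ring
  rw [e2]

lemma shiftZ_cocycle_continuous {A : Type*} [TopologicalSpace A]
    (c : (ℤ → A) → ℤ) (hc : Continuous c) :
    Continuous (fun x : ℤ → A => shiftZ (c x) x) := by
  rw [continuous_iff_continuousAt]
  intro x
  have hmem : c ⁻¹' {c x} ∈ nhds x :=
    ((isOpen_discrete _).preimage hc).mem_nhds rfl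
  have heq : (fun y : ℤ → A => shiftZ (c y) y) =ᶠ[nhds x]
      (fun y : ℤ → A => shiftZ (c x) y) :=
    Filter.eventuallyEq_of_mem hmem (fun y hy => by
      have hyx : c y = c x := hy
      simp only [hyx])
  exact ((shiftZ_continuous (c x)).continuousAt).congr heq.symm

/-- The even-cocycle action on `(A × A)^ℤ`. -/
def T2 {A G : Type*} [TopologicalSpace A] [Group G] (T : FullShiftTFGAction A G)
    {a b : A} (hab : a ≠ b) : FullShiftTFGAction (A × A) G where
  f g :=
    { toFun := fun x => shiftZ (c2 T g x) x
      invFun := fun x => shiftZ (c2 T g⁻¹ x) x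
      left_inv := fun x => by
        show shiftZ (c2 T g⁻¹ (shiftZ (c2 T g x) x)) (shiftZ (c2 T g x) x) = x
        rw [c2_comp T hab g⁻¹ g x, inv_mul_cancel]
        simp only [c2, c_one T hab]
        rw [mul_zero, shiftZ_zero]
      right_inv := fun x => by
        show shiftZ (c2 T g (shiftZ (c2 T g⁻¹ x) x)) (shiftZ (c2 T g⁻¹ x) x) = x
        rw [c2_comp T hab g g⁻¹ x, mul_inv_cancel]
        simp only [c2, c_one T hab]
        rw [mul_zero, shiftZ_zero]
      continuous_toFun := shiftZ_cocycle_continuous (c2 T g) (c2_continuous T g)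
      continuous_invFun := shiftZ_cocycle_continuous (c2 T g⁻¹) (c2_continuous T g⁻¹) }
  c g x := c2 T g x
  cont g := c2_continuous T g
  spec g x := rfl
  map_mul g h x := (c2_comp T hab g h x).symm

/-- Aperiodic lift of `u` to `(A × A)^ℤ` with `Pmap` equal to `u`. -/
def liftAp {A : Type*} (a b : A) (u : ℤ → A) : ℤ → A × A := fun j =>
  if j % 2 = 0 then (u (Int.ediv j 2), a) else (if j = 1 then b else a, b)

lemma Pmap_liftAp {A : Type*} (a b : A) (u : ℤ → A) :
    Pmap (liftAp a b u) = u := by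
  funext i
  simp only [Pmap, liftAp]
  rw [if_pos (show (2 * i) % 2 = 0 by omega)]
  simp only
  congr 1
  exact Int.mul_ediv_cancel_left i (by norm_num)

lemma liftAp_aperiodic {A : Type*} {a b : A} (hab : a ≠ b) (u : ℤ → A) :
    ∀ d : ℤ, d ≠ 0 → shiftZ d (liftAp a b u) ≠ liftAp a b u := by
  intro d hd hper
  by_cases hd2 : d % 2 = 0
  · have h1 := congrFun hper 1
    simp only [shiftZ] at h1
    have e1 : liftAp a b u (1 + d) = (a, b) := by
      simp only [liftAp]
      rw [if_neg (by omega), if_neg (by omega)]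
    have e2 : liftAp a b u 1 = (b, b) := by
      simp [liftAp]
    rw [e1, e2] at h1
    exact hab (congrArg Prod.fst h1)
  · have h0 := congrFun hper 0
    simp only [shiftZ, zero_add] at h0
    have e1 : (liftAp a b u d).2 = b := by
      simp only [liftAp]
      rw [if_neg hd2]
    have e2 : (liftAp a b u 0).2 = a := by
      simp only [liftAp]
      rw [if_pos (by omega)]
    have := congrArg Prod.snd h0
    rw [e1, e2] at this
    exact hab this.symm

/-- Periodic lift of `u` to `(A × A)^ℤ` with `Pmap` equal to `u`. -/
def liftPer {A : Type*} (u : ℤ → A) : ℤ → A × A := fun j =>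
  (u (Int.ediv j 2), u (Int.ediv j 2))

lemma Pmap_liftPer {A : Type*} (u : ℤ → A) : Pmap (liftPer u) = u := by
  funext i
  simp only [Pmap, liftPer]
  congr 1
  exact Int.mul_ediv_cancel_left i (by norm_num)

lemma liftPer_period {A : Type*} (u : ℤ → A) (p : ℕ)
    (hper : shiftZ (p : ℤ) u = u) :
    shiftZ (((2 * p : ℕ) : ℤ)) (liftPer u) = liftPer u := by
  funext j
  simp only [shiftZ, liftPer]
  have e : Int.ediv (j + ((2 * p : ℕ) : ℤ)) 2 = Int.ediv j 2 + (p : ℤ) := by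
    have hc : ((2 * p : ℕ) : ℤ) = (p : ℤ) * 2 := by push_cast; ring
    rw [hc]
    exact Int.add_mul_ediv_right j (p : ℤ) (by norm_num)
  rw [e]
  have h := congrFun hper (Int.ediv j 2)
  simp only [shiftZ] at h
  rw [h]

end EvenAux

/-- If `G` embeds in the topological full group of a full shift `A^ℤ` with linear
plook-ahead, then `G` admits a faithful action by topological full group elements of
the full shift `(A × A)^ℤ`, still with linear plook-ahead, in which the cocycle of
every group element takes only even values. -/
theorem even_cocycle_action {A G : Type*} [Fintype A] [TopologicalSpace A]
    [DiscreteTopology A] [Group G] (hcard : 2 ≤ Fintype.card A)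
    (T : FullShiftTFGAction A G) (hfaith : Function.Injective T.f)
    (α : ℕ → ℕ) (hα0 : α 0 = 0) (hαlin : LinearFn α) (hplook : HasPlook T α) :
    ∃ (T' : FullShiftTFGAction (A × A) G) (β : ℕ → ℕ),
      Function.Injective T'.f ∧ β 0 = 0 ∧ LinearFn β ∧ HasPlook T' β ∧
      ∀ g x, Even (T'.c g x) := by
  classical
  obtain ⟨a, b, hab⟩ := Fintype.exists_pair_of_one_lt_card (show 1 < Fintype.card A by omega)
  refine ⟨T2 T hab, fun k => if k = 0 then 0 else 2 * (Finset.range (k + 1)).sup α + 1,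
    ?_, ?_, ?_, ?_, ?_⟩
  · -- faithfulness
    intro g g' hgg'
    apply hfaith
    have hc : ∀ u : ℤ → A, T.c g u = T.c g' u := by
      intro u
      have hx : (T2 T hab).f g (liftAp a b u) = (T2 T hab).f g' (liftAp a b u) := by
        rw [hgg']
      rw [(T2 T hab).spec g, (T2 T hab).spec g'] at hx
      have h0 := shiftZ_cancel hx
      have hzero : (T2 T hab).c g (liftAp a b u) - (T2 T hab).c g' (liftAp a b u) = 0 := by
        by_contra h'
        exact liftAp_aperiodic hab u _ h' h0
      have hcg : (T2 T hab).c g (liftAp a b u) = 2 * T.c g u := by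
        show c2 T g _ = _
        simp only [c2, Pmap_liftAp]
      have hcg' : (T2 T hab).c g' (liftAp a b u) = 2 * T.c g' u := by
        show c2 T g' _ = _
        simp only [c2, Pmap_liftAp]
      rw [hcg, hcg'] at hzero
      omega
    apply DFunLike.ext
    intro u
    rw [T.spec g u, T.spec g' u, hc u]
  · simp
  · -- linearity of β
    obtain ⟨C, hC⟩ := hαlin
    refine ⟨2 * C + 1, fun k => ?_⟩
    by_cases hk : k = 0
    · simp [hk]
    · beta_reduce
      rw [if_neg hk]
      have hS : (Finset.range (k + 1)).sup α ≤ C * k + C := by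
        apply Finset.sup_le
        intro j hj
        have hjk : j ≤ k := by
          have := Finset.mem_range.mp hj
          omega
        calc α j ≤ C * j + C := hC j
          _ ≤ C * k + C := by
            have := Nat.mul_le_mul_left C hjk
            omega
      nlinarith [hS]
  · -- plook-ahead
    intro g hg
    obtain ⟨n, p, u, hn, hp, hpn, hper, hbd⟩ := hplook g hg
    have hm : 1 ≤ (T.c g u).natAbs := by
      by_contra h'
      have h0 : (T.c g u).natAbs = 0 := by omega
      rw [h0, hα0] at hbd
      omega
    set m : ℕ := (T.c g u).natAbs with hmdef
    refine ⟨2 * n + 1, 2 * p, liftPer u, by omega, by omega, by omega, ?_, ?_⟩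
    · exact_mod_cast liftPer_period u p hper
    · have hc2 : (T2 T hab).c g (liftPer u) = 2 * T.c g u := by
        show c2 T g _ = _
        simp only [c2, Pmap_liftPer]
      rw [hc2]
      have hnat : (2 * T.c g u).natAbs = 2 * m := by
        rw [Int.natAbs_mul]
        rfl
      rw [hnat]
      beta_reduce
      rw [if_neg (show ¬ 2 * m = 0 by omega)]
      have hS : α m ≤ (Finset.range (2 * m + 1)).sup α :=
        Finset.le_sup (Finset.mem_range.mpr (by omega))
      omega
  · -- evenness
    intro g x
    refine ⟨T.c g (Pmap x), ?_⟩
    show c2 T g x = _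
    simp only [c2]
    ring
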